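/- arXiv:1011.2485 — 9 statements merged into one kernel-verified Lean document; each statement's English description precedes it below -/
import Mathlib

section
/- Let φ : ℂ → ℂ be an entire function and define f : M₂(ℂ) → M₂(ℂ) by f(x)₁₁ = x₁₁, f(x)₂₂ = x₂₂, f(x)₁₂ = e^{-φ(x₁₂x₂₁)}·x₁₂, f(x)₂₁ = e^{φ(x₁₂x₂₁)}·x₂₁. Then for every x ∈ M₂(ℂ), the spectrum of f(x) equals the spectrum of x (indeed f(x) and x have the same trace and the same determinant). -/
open Matrix

theorem spectrum_trace_det_preserved
    (φ : ℂ → ℂ) (hφ : Differentiable ℂ φ)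
    (f : Matrix (Fin 2) (Fin 2) ℂ → Matrix (Fin 2) (Fin 2) ℂ)
    (hf : ∀ x, f x = !![x 0 0, Complex.exp (-φ (x 0 1 * x 1 0)) * x 0 1;
                        Complex.exp (φ (x 0 1 * x 1 0)) * x 1 0, x 1 1]) :
    ∀ x : Matrix (Fin 2) (Fin 2) ℂ,
      spectrum ℂ (f x) = spectrum ℂ x ∧ (f x).trace = x.trace ∧ (f x).det = x.det := by
  intro x
  have key : Complex.exp (-φ (x 0 1 * x 1 0)) * x 0 1 *
      (Complex.exp (φ (x 0 1 * x 1 0)) * x 1 0) = x 0 1 * x 1 0 := by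
    rw [mul_mul_mul_comm, ← Complex.exp_add, neg_add_cancel, Complex.exp_zero, one_mul]
  have hd : ∀ lam : ℂ,
      (algebraMap ℂ (Matrix (Fin 2) (Fin 2) ℂ) lam - f x).det =
      (algebraMap ℂ (Matrix (Fin 2) (Fin 2) ℂ) lam - x).det := by
    intro lam
    rw [hf x]
    simp [Matrix.det_fin_two, Matrix.algebraMap_eq_diagonal, Matrix.sub_apply,
      Matrix.diagonal_apply]
    linear_combination key
  refine ⟨?_, ?_, ?_⟩
  · ext lam
    simp only [spectrum.mem_iff, not_iff_not, Matrix.isUnit_iff_isUnit_det, hd lam]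
  · rw [hf x]; simp [Matrix.trace_fin_two]
  · rw [hf x]; simp [Matrix.det_fin_two, key]
end

section
/- Let φ : ℂ → ℂ be an entire function and define f : M₂(ℂ) → M₂(ℂ) by f(x)₁₁ = x₁₁, f(x)₂₂ = x₂₂, f(x)₁₂ = e^{-φ(x₁₂x₂₁)}·x₁₂, f(x)₂₁ = e^{φ(x₁₂x₂₁)}·x₂₁. Then f maps Ω into Ω, where Ω = {x ∈ M₂(ℂ) : spectral radius of x < 1} is the spectral ball. -/
open Matrix

theorem maps_spectral_ball_into_itself
    (φ : ℂ → ℂ) (hφ : Differentiable ℂ φ)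
    (f : Matrix (Fin 2) (Fin 2) ℂ → Matrix (Fin 2) (Fin 2) ℂ)
    (hf : ∀ x, f x = !![x 0 0, Complex.exp (-φ (x 0 1 * x 1 0)) * x 0 1;
                        Complex.exp (φ (x 0 1 * x 1 0)) * x 1 0, x 1 1])
    (Ω : Set (Matrix (Fin 2) (Fin 2) ℂ))
    (hΩ : Ω = {x | ∀ z ∈ spectrum ℂ x, ‖z‖ < 1}) :
    Set.MapsTo f Ω Ω := by
  subst hΩ
  intro x hx z hz
  apply hx z
  rw [spectrum.mem_iff] at hz ⊢
  rw [Matrix.isUnit_iff_isUnit_det] at hz ⊢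
  have key : ((algebraMap ℂ (Matrix (Fin 2) (Fin 2) ℂ)) z - f x).det
      = ((algebraMap ℂ (Matrix (Fin 2) (Fin 2) ℂ)) z - x).det := by
    rw [hf]
    simp [Matrix.det_fin_two, Matrix.algebraMap_matrix_apply]
    have : Complex.exp (-φ (x 0 1 * x 1 0)) * Complex.exp (φ (x 0 1 * x 1 0)) = 1 := by
      rw [← Complex.exp_add, neg_add_cancel, Complex.exp_zero]
    linear_combination x 0 1 * x 1 0 * this
  rwa [key] at hz
end

section
/- Let φ : ℂ → ℂ be an entire function and define f : M₂(ℂ) → M₂(ℂ) by f(x)₁₁ = x₁₁, f(x)₂₂ = x₂₂, f(x)₁₂ = e^{-φ(x₁₂x₂₁)}·x₁₂, f(x)₂₁ = e^{φ(x₁₂x₂₁)}·x₂₁. Then f restricts to a bijection of the spectral ball Ω onto itself, f is holomorphic on M₂(ℂ), and the inverse of this restriction is also holomorphic. -/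
open Matrix

attribute [local instance] Matrix.normedAddCommGroup Matrix.normedSpace

private lemma spec_eq_aux (x y : Matrix (Fin 2) (Fin 2) ℂ)
    (h00 : x 0 0 = y 0 0) (h11 : x 1 1 = y 1 1)
    (hp : x 0 1 * x 1 0 = y 0 1 * y 1 0) :
    spectrum ℂ x = spectrum ℂ y := by
  ext z
  have e : ∀ w : Matrix (Fin 2) (Fin 2) ℂ,
      Matrix.det (algebraMap ℂ (Matrix (Fin 2) (Fin 2) ℂ) z - w) =
        (z - w 0 0) * (z - w 1 1) - w 0 1 * w 1 0 := by
    intro w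
    simp [Matrix.det_fin_two, Matrix.sub_apply, Matrix.algebraMap_matrix_apply]
  simp only [spectrum.mem_iff] at *
  rw [Matrix.isUnit_iff_isUnit_det, Matrix.isUnit_iff_isUnit_det, e, e, h00, h11, hp]

theorem automorphism_of_spectral_ball
    (φ : ℂ → ℂ) (hφ : Differentiable ℂ φ)
    (f : Matrix (Fin 2) (Fin 2) ℂ → Matrix (Fin 2) (Fin 2) ℂ)
    (hf : ∀ x, f x = !![x 0 0, Complex.exp (-φ (x 0 1 * x 1 0)) * x 0 1;
                        Complex.exp (φ (x 0 1 * x 1 0)) * x 1 0, x 1 1])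
    (Ω : Set (Matrix (Fin 2) (Fin 2) ℂ))
    (hΩ : Ω = {x | ∀ z ∈ spectrum ℂ x, ‖z‖ < 1}) :
    Set.BijOn f Ω Ω ∧ Differentiable ℂ f ∧
      ∃ g : Matrix (Fin 2) (Fin 2) ℂ → Matrix (Fin 2) (Fin 2) ℂ,
        Set.InvOn g f Ω Ω ∧ DifferentiableOn ℂ g Ω := by
  -- entries of f
  have hf00 : ∀ x, f x 0 0 = x 0 0 := by intro x; rw [hf]; simp
  have hf01 : ∀ x, f x 0 1 = Complex.exp (-φ (x 0 1 * x 1 0)) * x 0 1 := by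
    intro x; rw [hf]; simp
  have hf10 : ∀ x, f x 1 0 = Complex.exp (φ (x 0 1 * x 1 0)) * x 1 0 := by
    intro x; rw [hf]; simp
  have hf11 : ∀ x, f x 1 1 = x 1 1 := by intro x; rw [hf]; simp
  have cancel : ∀ (t a b : ℂ), Complex.exp (-t) * a * (Complex.exp t * b) = a * b := by
    intro t a b
    rw [mul_mul_mul_comm, ← Complex.exp_add, neg_add_cancel, Complex.exp_zero, one_mul]
  have hprod : ∀ x, f x 0 1 * f x 1 0 = x 0 1 * x 1 0 := by
    intro x; rw [hf01, hf10]; exact cancel _ _ _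
  -- the inverse
  set g : Matrix (Fin 2) (Fin 2) ℂ → Matrix (Fin 2) (Fin 2) ℂ := fun x =>
    !![x 0 0, Complex.exp (φ (x 0 1 * x 1 0)) * x 0 1;
       Complex.exp (-φ (x 0 1 * x 1 0)) * x 1 0, x 1 1] with hg
  have hg00 : ∀ x, g x 0 0 = x 0 0 := by intro x; rw [hg]; simp
  have hg01 : ∀ x, g x 0 1 = Complex.exp (φ (x 0 1 * x 1 0)) * x 0 1 := by
    intro x; rw [hg]; simp
  have hg10 : ∀ x, g x 1 0 = Complex.exp (-φ (x 0 1 * x 1 0)) * x 1 0 := by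
    intro x; rw [hg]; simp
  have hg11 : ∀ x, g x 1 1 = x 1 1 := by intro x; rw [hg]; simp
  have hgprod : ∀ x, g x 0 1 * g x 1 0 = x 0 1 * x 1 0 := by
    intro x; rw [hg01, hg10, mul_mul_mul_comm, ← Complex.exp_add, add_neg_cancel,
      Complex.exp_zero, one_mul]
  have hgf : ∀ x, g (f x) = x := by
    intro x
    ext i j
    fin_cases i <;> fin_cases j
    · show g (f x) 0 0 = x 0 0
      rw [hg00, hf00]
    · show g (f x) 0 1 = x 0 1
      rw [hg01, hprod, hf01, ← mul_assoc, ← Complex.exp_add, add_neg_cancel,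
        Complex.exp_zero, one_mul]
    · show g (f x) 1 0 = x 1 0
      rw [hg10, hprod, hf10, ← mul_assoc, ← Complex.exp_add, neg_add_cancel,
        Complex.exp_zero, one_mul]
    · show g (f x) 1 1 = x 1 1
      rw [hg11, hf11]
  have hfg : ∀ x, f (g x) = x := by
    intro x
    ext i j
    fin_cases i <;> fin_cases j
    · show f (g x) 0 0 = x 0 0
      rw [hf00, hg00]
    · show f (g x) 0 1 = x 0 1
      rw [hf01, hgprod, hg01, ← mul_assoc, ← Complex.exp_add, neg_add_cancel,
        Complex.exp_zero, one_mul]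
    · show f (g x) 1 0 = x 1 0
      rw [hf10, hgprod, hg10, ← mul_assoc, ← Complex.exp_add, add_neg_cancel,
        Complex.exp_zero, one_mul]
    · show f (g x) 1 1 = x 1 1
      rw [hf11, hg11]
  -- spectrum preservation
  have hspec : ∀ x, spectrum ℂ (f x) = spectrum ℂ x := fun x =>
    spec_eq_aux _ _ (hf00 x) (hf11 x) (hprod x)
  have hgspec : ∀ x, spectrum ℂ (g x) = spectrum ℂ x := fun x => by
    have := hspec (g x); rw [hfg x] at this; exact this.symm
  have hmapf : Set.MapsTo f Ω Ω := by
    rw [hΩ]; intro x hx z hz; exact hx z (by rwa [hspec x] at hz)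
  have hmapg : Set.MapsTo g Ω Ω := by
    rw [hΩ]; intro x hx z hz; exact hx z (by rwa [hgspec x] at hz)
  have hinv : Set.InvOn g f Ω Ω := ⟨fun x _ => hgf x, fun x _ => hfg x⟩
  -- differentiability
  have hproj : ∀ i j : Fin 2, Differentiable ℂ
      (fun x : Matrix (Fin 2) (Fin 2) ℂ => x i j) := by
    intro i j
    exact (LinearMap.toContinuousLinearMap (Matrix.entryLinearMap ℂ ℂ i j)).differentiable
  have hp : Differentiable ℂ (fun x : Matrix (Fin 2) (Fin 2) ℂ => φ (x 0 1 * x 1 0)) :=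
    hφ.comp ((hproj 0 1).mul (hproj 1 0))
  have hdf : Differentiable ℂ f := by
    have : f = fun x => !![x 0 0, Complex.exp (-φ (x 0 1 * x 1 0)) * x 0 1;
        Complex.exp (φ (x 0 1 * x 1 0)) * x 1 0, x 1 1] := funext hf
    rw [this]
    apply differentiable_pi.mpr
    intro i
    apply differentiable_pi.mpr
    intro j
    fin_cases i <;> fin_cases j <;> simp
    · exact hproj 0 0
    · exact (hp.neg.cexp).mul (hproj 0 1)
    · exact (hp.cexp).mul (hproj 1 0)
    · exact hproj 1 1
  have hdg : Differentiable ℂ g := by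
    rw [hg]
    apply differentiable_pi.mpr
    intro i
    apply differentiable_pi.mpr
    intro j
    fin_cases i <;> fin_cases j <;> simp
    · exact hproj 0 0
    · exact (hp.cexp).mul (hproj 0 1)
    · exact (hp.neg.cexp).mul (hproj 1 0)
    · exact hproj 1 1
  exact ⟨hinv.bijOn hmapf hmapg, hdf, g, hinv, hdg.differentiableOn⟩
end

section
/- Let φ : ℂ → ℂ be a non-constant entire function and define f : M₂(ℂ) → M₂(ℂ) by f(x)₁₁ = x₁₁, f(x)₂₂ = x₂₂, f(x)₁₂ = e^{-φ(x₁₂x₂₁)}·x₁₂, f(x)₂₁ = e^{φ(x₁₂x₂₁)}·x₂₁. Let 𝔖 = {x ∈ M₂(ℂ) : det x = 0 and tr x = 1/2}. Then there is no invertible matrix n ∈ M₂(ℂ) such that f(x) = n·x·n⁻¹ for all x ∈ 𝔖. -/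
open Matrix

theorem not_conjugation_on_fiber
    (φ : ℂ → ℂ) (hφ : Differentiable ℂ φ) (hnc : ¬ ∃ c : ℂ, ∀ z : ℂ, φ z = c)
    (f : Matrix (Fin 2) (Fin 2) ℂ → Matrix (Fin 2) (Fin 2) ℂ)
    (hf : ∀ x, f x = !![x 0 0, Complex.exp (-φ (x 0 1 * x 1 0)) * x 0 1;
                        Complex.exp (φ (x 0 1 * x 1 0)) * x 1 0, x 1 1]) :
    ¬ ∃ n : Matrix (Fin 2) (Fin 2) ℂ, IsUnit n ∧
        ∀ x : Matrix (Fin 2) (Fin 2) ℂ, x.det = 0 → x.trace = 1 / 2 → f x = n * x * n⁻¹ := by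
  rintro ⟨n, hn, h⟩
  have hdet : IsUnit n.det := (Matrix.isUnit_iff_isUnit_det n).mp hn
  -- main equation: for x in the fiber, f x * n = n * x
  have key : ∀ x : Matrix (Fin 2) (Fin 2) ℂ, x.det = 0 → x.trace = 1 / 2 →
      f x * n = n * x := by
    intro x hd ht
    have := h x hd ht
    calc f x * n = n * x * n⁻¹ * n := by rw [this]
    _ = n * x := Matrix.nonsing_inv_mul_cancel_right _ _ hdet
  -- membership lemma for !![a, b; c, 1/2 - a] with b*c = a*(1/2-a)
  have mem : ∀ a b c : ℂ, b * c = a * (1/2 - a) →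
      (!![a, b; c, 1/2 - a] : Matrix (Fin 2) (Fin 2) ℂ).det = 0 ∧
      (!![a, b; c, 1/2 - a] : Matrix (Fin 2) (Fin 2) ℂ).trace = 1 / 2 := by
    intro a b c hbc
    constructor
    · rw [Matrix.det_fin_two_of]; linear_combination -hbc
    · rw [Matrix.trace_fin_two_of]; ring
  -- Step 1: n 1 0 = 0
  have h10 : n 1 0 = 0 := by
    obtain ⟨hd, ht⟩ := mem 0 1 0 (by ring)
    have heq := key _ hd ht
    rw [hf] at heq
    have := congrArg (fun m => m 0 0) heq
    simp [Matrix.mul_apply, Fin.sum_univ_two] at this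
    exact this
  -- Step 2: n 0 1 = 0
  have h01 : n 0 1 = 0 := by
    obtain ⟨hd, ht⟩ := mem 0 0 1 (by ring)
    have heq := key _ hd ht
    rw [hf] at heq
    have := congrArg (fun m => m 1 1) heq
    simp [Matrix.mul_apply, Fin.sum_univ_two] at this
    have h2 : Complex.exp (φ 0) * n 0 1 = 0 := by linear_combination this
    rcases mul_eq_zero.mp h2 with h | h
    · exact absurd h (Complex.exp_ne_zero _)
    · exact h
  -- n 1 1 ≠ 0
  have h11 : n 1 1 ≠ 0 := by
    intro hz
    have : n.det = 0 := by
      rw [Matrix.det_fin_two, hz, h01]; ring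
    rw [this] at hdet
    exact hdet.ne_zero rfl
  -- Step 3: for all z, exp (-φ z) * n 1 1 = n 0 0
  have main : ∀ z : ℂ, Complex.exp (-φ z) * n 1 1 = n 0 0 := by
    intro z
    obtain ⟨w, hw⟩ := IsAlgClosed.exists_pow_nat_eq (k := ℂ) (1/16 - z) (n := 2) (by norm_num)
    set a : ℂ := 1/4 + w with ha
    have haz : (1 : ℂ) * z = a * (1/2 - a) := by
      rw [ha]; linear_combination hw
    obtain ⟨hd, ht⟩ := mem a 1 z haz
    have heq := key _ hd ht
    rw [hf] at heq
    have := congrArg (fun m => m 0 1) heq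
    simp [Matrix.mul_apply, Fin.sum_univ_two, h01] at this
    exact this
  -- Step 4: φ is constant, contradiction
  have hderiv : ∀ z : ℂ, deriv φ z = 0 := by
    intro z
    have hconst : (fun z : ℂ => Complex.exp (-φ z)) = fun _ => n 0 0 * (n 1 1)⁻¹ := by
      funext t
      field_simp [main t]
      exact main t
    have h1 : HasDerivAt (fun z : ℂ => Complex.exp (-φ z))
        (Complex.exp (-φ z) * -(deriv φ z)) z := ((hφ z).hasDerivAt.neg).cexp
    have h2 : deriv (fun z : ℂ => Complex.exp (-φ z)) z = 0 := by
      rw [hconst]; simp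
    rw [h1.deriv] at h2
    have := mul_eq_zero.mp h2
    rcases this with h | h
    · exact absurd h (Complex.exp_ne_zero _)
    · simpa using h
  exact hnc ⟨φ 0, fun z => is_const_of_deriv_eq_zero hφ hderiv z 0⟩
end

section
/- Let φ : ℂ → ℂ be a non-constant entire function and define f : M₂(ℂ) → M₂(ℂ) by f(x)₁₁ = x₁₁, f(x)₂₂ = x₂₂, f(x)₁₂ = e^{-φ(x₁₂x₂₁)}·x₁₂, f(x)₂₁ = e^{φ(x₁₂x₂₁)}·x₂₁. Then there is no map u : Ω → GL₂(ℂ) that is conjugate invariant (i.e. u(q⁻¹·x·q) = u(x) for every x ∈ Ω and every invertible q ∈ M₂(ℂ)) and satisfies f(x) = u(x)⁻¹·x·u(x) for every x ∈ Ω. -/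
open Matrix

private lemma mem_omega_aux (a b c : ℂ) (h : a*a + b*c = 1/2) (z : ℂ)
    (hz : z ∈ spectrum ℂ (!![a, b; c, -a])) : ‖z‖ < 1 := by
  rw [spectrum.mem_iff, Matrix.isUnit_iff_isUnit_det, isUnit_iff_ne_zero, not_not] at hz
  have hd : (algebraMap ℂ (Matrix (Fin 2) (Fin 2) ℂ) z - !![a, b; c, -a]) =
      !![z - a, -b; -c, z + a] := by
    ext i j
    fin_cases i <;> fin_cases j <;>
      simp [Matrix.algebraMap_matrix_apply, Matrix.one_apply, sub_eq_add_neg]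
  rw [hd, Matrix.det_fin_two_of] at hz
  have hz2 : z^2 = 1/2 := by ring_nf at hz ⊢; linear_combination hz + h
  have habs : (‖z‖)^2 = ‖z^2‖ := by rw [norm_pow]
  rw [hz2] at habs
  simp at habs
  nlinarith [norm_nonneg z, habs]

theorem not_conjugate_invariant_conjugation
    (φ : ℂ → ℂ) (hφ : Differentiable ℂ φ) (hnc : ¬ ∃ c : ℂ, ∀ z : ℂ, φ z = c)
    (f : Matrix (Fin 2) (Fin 2) ℂ → Matrix (Fin 2) (Fin 2) ℂ)
    (hf : ∀ x, f x = !![x 0 0, Complex.exp (-φ (x 0 1 * x 1 0)) * x 0 1;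
                        Complex.exp (φ (x 0 1 * x 1 0)) * x 1 0, x 1 1])
    (Ω : Set (Matrix (Fin 2) (Fin 2) ℂ))
    (hΩ : Ω = {x | ∀ z ∈ spectrum ℂ x, ‖z‖ < 1}) :
    ¬ ∃ u : Matrix (Fin 2) (Fin 2) ℂ → Matrix (Fin 2) (Fin 2) ℂ,
        (∀ x ∈ Ω, IsUnit (u x)) ∧
        (∀ x ∈ Ω, ∀ q : Matrix (Fin 2) (Fin 2) ℂ, IsUnit q → u (q⁻¹ * x * q) = u x) ∧
        (∀ x ∈ Ω, f x = (u x)⁻¹ * x * u x) := by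
  rintro ⟨u, hu, hinv, hconj⟩
  -- choose w with exp (φ w) ≠ exp (φ (1/2))
  obtain ⟨w, hw⟩ : ∃ w : ℂ, Complex.exp (φ w) ≠ Complex.exp (φ (1/2)) := by
    by_contra h
    push_neg at h
    have hderiv : ∀ x : ℂ, deriv φ x = 0 := by
      intro x
      have h1 : HasDerivAt (fun w => Complex.exp (φ w)) (Complex.exp (φ x) * deriv φ x) x :=
        (hφ x).hasDerivAt.cexp
      have h2 : (fun w => Complex.exp (φ w)) = fun _ => Complex.exp (φ (1/2)) := funext h
      rw [h2] at h1
      have := h1.unique (hasDerivAt_const x _)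
      exact (mul_eq_zero.mp this).resolve_left (Complex.exp_ne_zero (φ x))
    have hfd : ∀ x : ℂ, fderiv ℂ φ x = 0 := by
      intro x
      have h1 : HasDerivAt φ 0 x := by
        have := (hφ x).hasDerivAt
        rwa [hderiv x] at this
      rw [h1.hasFDerivAt.fderiv]
      ext
      simp
    exact hnc ⟨φ 0, fun z => is_const_of_fderiv_eq_zero hφ hfd z 0⟩
  obtain ⟨d, hd⟩ : ∃ d : ℂ, d ^ 2 = 1/2 - w :=
    IsAlgClosed.exists_pow_nat_eq (1/2 - w) (by norm_num)
  set A : Matrix (Fin 2) (Fin 2) ℂ := !![0, 1/2; 1, 0] with hA_def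
  set A' : Matrix (Fin 2) (Fin 2) ℂ := !![0, 1; 1/2, 0] with hA'_def
  set B : Matrix (Fin 2) (Fin 2) ℂ := !![d, w; 1, -d] with hB_def
  have hA : A ∈ Ω := by
    rw [hΩ]; intro z hz
    exact mem_omega_aux 0 (1/2) 1 (by ring) z (by simpa [hA_def] using hz)
  have hA' : A' ∈ Ω := by
    rw [hΩ]; intro z hz
    exact mem_omega_aux 0 1 (1/2) (by ring) z (by simpa [hA'_def] using hz)
  have hB : B ∈ Ω := by
    rw [hΩ]; intro z hz
    exact mem_omega_aux d w 1 (by rw [← sq]; linear_combination hd) z (by simpa [hB_def] using hz)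
  -- key intertwining equation
  have key : ∀ x ∈ Ω, x * u x = u x * f x := by
    intro x hx
    have hdet := (Matrix.isUnit_iff_isUnit_det _).mp (hu x hx)
    rw [hconj x hx, Matrix.mul_assoc ((u x)⁻¹) x (u x), ← Matrix.mul_assoc,
      Matrix.mul_nonsing_inv _ hdet, Matrix.one_mul]
  -- conjugators
  have huA' : u A' = u A := by
    have hq : IsUnit (!![(1:ℂ)/2, 0; 0, 1]) := by
      rw [Matrix.isUnit_iff_isUnit_det, Matrix.det_fin_two_of, isUnit_iff_ne_zero]
      norm_num
    have hqdet := (Matrix.isUnit_iff_isUnit_det _).mp hq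
    have hcomm : A * !![(1:ℂ)/2, 0; 0, 1] = !![(1:ℂ)/2, 0; 0, 1] * A' := by
      ext i j
      fin_cases i <;> fin_cases j <;>
        simp [hA_def, hA'_def, Matrix.mul_apply, Fin.sum_univ_two]
    have hconj' : (!![(1:ℂ)/2, 0; 0, 1])⁻¹ * A * !![(1:ℂ)/2, 0; 0, 1] = A' := by
      rw [Matrix.mul_assoc, hcomm, ← Matrix.mul_assoc, Matrix.nonsing_inv_mul _ hqdet,
        Matrix.one_mul]
    have := hinv A hA _ hq
    rwa [hconj'] at this
  have huB : u B = u A := by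
    have hq : IsUnit (!![(1:ℂ), -d; 0, 1]) := by
      rw [Matrix.isUnit_iff_isUnit_det, Matrix.det_fin_two_of, isUnit_iff_ne_zero]
      norm_num
    have hqdet := (Matrix.isUnit_iff_isUnit_det _).mp hq
    have hcomm : A * !![(1:ℂ), -d; 0, 1] = !![(1:ℂ), -d; 0, 1] * B := by
      ext i j
      fin_cases i <;> fin_cases j <;>
        simp [hA_def, hB_def, Matrix.mul_apply, Fin.sum_univ_two] <;>
        first
        | linear_combination hd
        | linear_combination -hd
        | linear_combination (2:ℂ) * hd
        | linear_combination (-2:ℂ) * hd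
    have hconj' : (!![(1:ℂ), -d; 0, 1])⁻¹ * A * !![(1:ℂ), -d; 0, 1] = B := by
      rw [Matrix.mul_assoc, hcomm, ← Matrix.mul_assoc, Matrix.nonsing_inv_mul _ hqdet,
        Matrix.one_mul]
    have := hinv A hA _ hq
    rwa [hconj'] at this
  set U : Matrix (Fin 2) (Fin 2) ℂ := u A with hU_def
  have EA : A * U = U * f A := key A hA
  have EA' : A' * U = U * f A' := by have := key A' hA'; rwa [huA'] at this
  have EB : B * U = U * f B := by have := key B hB; rwa [huB] at this
  -- extract entry equations
  have eA10 := Matrix.ext_iff.mpr EA 1 0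
  have eA11 := Matrix.ext_iff.mpr EA 1 1
  have eA'00 := Matrix.ext_iff.mpr EA' 0 0
  have eB10 := Matrix.ext_iff.mpr EB 1 0
  simp [hf, hA_def, hA'_def, hB_def, Matrix.mul_apply, Fin.sum_univ_two] at eA10 eA11 eA'00 eB10
  rw [one_div] at hw
  have hee : Complex.exp (-φ 2⁻¹) * Complex.exp (φ 2⁻¹) = 1 := by
    rw [← Complex.exp_add]; simp
  have hr : U 1 0 = 0 := by
    rw [eA11] at eA'00
    linear_combination (4/3 : ℂ) * eA'00 + (U 1 0 / 3) * hee
  have hq0 : U 0 1 = 0 := by rw [eA11, hr]; ring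
  have hs : U 1 1 = 0 := by
    have h1 : U 1 1 * (Complex.exp (φ w) - Complex.exp (φ 2⁻¹)) = 0 := by
      linear_combination eA10 - eB10 - (2*d) * hr
    rcases mul_eq_zero.mp h1 with h | h
    · exact h
    · exact absurd (sub_eq_zero.mp h) hw
  have hp : U 0 0 = 0 := by rw [eA10, hs]; ring
  have hU0 : U = 0 := by
    ext i j
    fin_cases i <;> fin_cases j <;> simp [hp, hq0, hr, hs]
  have hUnit := hu A hA
  rw [← hU_def, hU0] at hUnit
  exact not_isUnit_zero hUnit
end

section
/- Let a : ℂ → ℂ be an entire function and for x ∈ M₂(ℂ) set u(x) = [[1, 0], [a(x₁₂), 1]] and f(x) = u(x)·x·u(x)⁻¹. Then f maps the spectral ball Ω into Ω, and the map g(x) = u(x)⁻¹·x·u(x) satisfies g(f(x)) = x and f(g(x)) = x for all x ∈ M₂(ℂ); in particular f restricts to a bijection of Ω onto itself. -/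
open Matrix

lemma uInv_aux (α : ℂ) : (!![1, 0; α, 1] : Matrix (Fin 2) (Fin 2) ℂ)⁻¹ = !![1, 0; -α, 1] := by
  apply inv_eq_right_inv
  ext i j
  fin_cases i <;> fin_cases j <;> simp [Matrix.mul_apply, Matrix.vecMul, dotProduct, Fin.sum_univ_two]

lemma uUnit_aux (α : ℂ) : IsUnit (!![1, 0; α, 1] : Matrix (Fin 2) (Fin 2) ℂ) := by
  rw [Matrix.isUnit_iff_isUnit_det]
  simp [Matrix.det_fin_two]

lemma entry_aux (α : ℂ) (x : Matrix (Fin 2) (Fin 2) ℂ) :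
    (!![1, 0; α, 1] * x * !![1, 0; -α, 1]) 0 1 = x 0 1 := by
  simp [Matrix.mul_apply, Matrix.vecMul, dotProduct, Fin.sum_univ_two]

lemma spec_aux (α : ℂ) (x : Matrix (Fin 2) (Fin 2) ℂ) :
    spectrum ℂ (!![1, 0; α, 1] * x * (!![1, 0; α, 1] : Matrix (Fin 2) (Fin 2) ℂ)⁻¹)
      = spectrum ℂ x := by
  obtain ⟨U, hU⟩ := uUnit_aux α
  rw [← hU, ← Matrix.coe_units_inv, spectrum.units_conjugate]

lemma spec_aux' (α : ℂ) (x : Matrix (Fin 2) (Fin 2) ℂ) :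
    spectrum ℂ ((!![1, 0; α, 1] : Matrix (Fin 2) (Fin 2) ℂ)⁻¹ * x * !![1, 0; α, 1])
      = spectrum ℂ x := by
  obtain ⟨U, hU⟩ := uUnit_aux α
  rw [← hU, ← Matrix.coe_units_inv, spectrum.units_conjugate']

theorem unipotent_conjugation_automorphism
    (a : ℂ → ℂ) (ha : Differentiable ℂ a)
    (u : Matrix (Fin 2) (Fin 2) ℂ → Matrix (Fin 2) (Fin 2) ℂ)
    (hu : ∀ x, u x = !![1, 0; a (x 0 1), 1])
    (f g : Matrix (Fin 2) (Fin 2) ℂ → Matrix (Fin 2) (Fin 2) ℂ)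
    (hf : ∀ x, f x = u x * x * (u x)⁻¹)
    (hg : ∀ x, g x = (u x)⁻¹ * x * u x)
    (Ω : Set (Matrix (Fin 2) (Fin 2) ℂ))
    (hΩ : Ω = {x | ∀ z ∈ spectrum ℂ x, ‖z‖ < 1}) :
    Set.MapsTo f Ω Ω ∧
    (∀ x : Matrix (Fin 2) (Fin 2) ℂ, g (f x) = x ∧ f (g x) = x) ∧
    Set.BijOn f Ω Ω := by
  -- the (0,1)-entry is preserved by f and g
  have hfe : ∀ x, (f x) 0 1 = x 0 1 := by
    intro x
    rw [hf, hu, uInv_aux]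
    exact entry_aux _ x
  have hge : ∀ x, (g x) 0 1 = x 0 1 := by
    intro x
    rw [hg, hu, uInv_aux]
    have := entry_aux (-(a (x 0 1))) x
    simpa using this
  have huf : ∀ x, u (f x) = u x := fun x => by rw [hu, hu, hfe]
  have hug : ∀ x, u (g x) = u x := fun x => by rw [hu, hu, hge]
  have hUnit : ∀ x, IsUnit (u x) := fun x => by rw [hu]; exact uUnit_aux _
  have hgf : ∀ x, g (f x) = x := by
    intro x
    rw [hg, huf, hf]
    obtain ⟨U, hU⟩ := hUnit x
    rw [← hU, ← Matrix.coe_units_inv]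
    calc (↑U⁻¹ * (↑U * x * ↑U⁻¹) * (U : Matrix (Fin 2) (Fin 2) ℂ))
        = ↑(U⁻¹ * U) * x * ↑(U⁻¹ * U) := by push_cast; noncomm_ring
      _ = x := by simp
  have hfg : ∀ x, f (g x) = x := by
    intro x
    rw [hf, hug, hg]
    obtain ⟨U, hU⟩ := hUnit x
    rw [← hU, ← Matrix.coe_units_inv]
    calc ((U : Matrix (Fin 2) (Fin 2) ℂ) * (↑U⁻¹ * x * ↑U) * ↑U⁻¹)
        = ↑(U * U⁻¹) * x * ↑(U * U⁻¹) := by push_cast; noncomm_ring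
      _ = x := by simp
  have hfspec : ∀ x, spectrum ℂ (f x) = spectrum ℂ x := by
    intro x; rw [hf, hu]; exact spec_aux _ x
  have hgspec : ∀ x, spectrum ℂ (g x) = spectrum ℂ x := by
    intro x; rw [hg, hu]; exact spec_aux' _ x
  have hmf : Set.MapsTo f Ω Ω := by
    intro x hx
    rw [hΩ] at hx ⊢
    intro z hz
    exact hx z ((hfspec x) ▸ hz)
  refine ⟨hmf, fun x => ⟨hgf x, hfg x⟩, hmf, ?_, ?_⟩
  · intro x _ y _ h
    rw [← hgf x, ← hgf y, h]
  · intro y hy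
    refine ⟨g y, ?_, hfg y⟩
    rw [hΩ] at hy ⊢
    intro z hz
    exact hy z ((hgspec y) ▸ hz)
end

section
/- Let a : ℂ → ℂ be an entire function and for x ∈ M₂(ℂ) set u(x) = [[1, 0], [a(x₁₂), 1]] and f(x) = u(x)·x·u(x)⁻¹. Then f is holomorphic on M₂(ℂ), and its restriction to the spectral ball Ω is a bijection of Ω onto itself whose inverse x ↦ u(x)⁻¹·x·u(x) is holomorphic. -/
open Matrix

attribute [local instance] Matrix.normedAddCommGroup Matrix.normedSpace

theorem unipotent_conjugation_holomorphic_automorphism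
    (a : ℂ → ℂ) (ha : Differentiable ℂ a)
    (u : Matrix (Fin 2) (Fin 2) ℂ → Matrix (Fin 2) (Fin 2) ℂ)
    (hu : ∀ x, u x = !![1, 0; a (x 0 1), 1])
    (f g : Matrix (Fin 2) (Fin 2) ℂ → Matrix (Fin 2) (Fin 2) ℂ)
    (hf : ∀ x, f x = u x * x * (u x)⁻¹)
    (hg : ∀ x, g x = (u x)⁻¹ * x * u x)
    (Ω : Set (Matrix (Fin 2) (Fin 2) ℂ))
    (hΩ : Ω = {x | ∀ z ∈ spectrum ℂ x, ‖z‖ < 1}) :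
    Differentiable ℂ f ∧ Set.BijOn f Ω Ω ∧ Set.InvOn g f Ω Ω ∧ DifferentiableOn ℂ g Ω := by
  -- explicit inverse of u
  set v : Matrix (Fin 2) (Fin 2) ℂ → Matrix (Fin 2) (Fin 2) ℂ :=
    fun x => !![1, 0; -a (x 0 1), 1] with hv
  have huv : ∀ x, u x * v x = 1 := by
    intro x
    rw [hu]
    ext i j
    fin_cases i <;> fin_cases j <;>
      simp [hv, Matrix.mul_apply, Fin.sum_univ_two, Matrix.one_apply]
  have hvu : ∀ x, v x * u x = 1 := by
    intro x
    rw [hu]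
    ext i j
    fin_cases i <;> fin_cases j <;>
      simp [hv, Matrix.mul_apply, Fin.sum_univ_two, Matrix.one_apply]
  have hinv : ∀ x, (u x)⁻¹ = v x := fun x => Matrix.inv_eq_right_inv (huv x)
  -- the unit
  set U : Matrix (Fin 2) (Fin 2) ℂ → (Matrix (Fin 2) (Fin 2) ℂ)ˣ :=
    fun x => ⟨u x, v x, huv x, hvu x⟩ with hU
  -- explicit formulas
  have hfx : ∀ x, f x = !![x 0 0 - a (x 0 1) * x 0 1, x 0 1;
      a (x 0 1) * x 0 0 + x 1 0 - a (x 0 1) * (a (x 0 1) * x 0 1 + x 1 1),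
      a (x 0 1) * x 0 1 + x 1 1] := by
    intro x
    rw [hf, hinv, hu]
    ext i j
    fin_cases i <;> fin_cases j <;>
      simp [hv, Matrix.mul_apply, Matrix.vecMul, dotProduct, Fin.sum_univ_two] <;> ring
  have hgx : ∀ x, g x = !![x 0 0 + a (x 0 1) * x 0 1, x 0 1;
      -a (x 0 1) * x 0 0 + x 1 0 + a (x 0 1) * (-a (x 0 1) * x 0 1 + x 1 1),
      -a (x 0 1) * x 0 1 + x 1 1] := by
    intro x
    rw [hg, hinv, hu]
    ext i j
    fin_cases i <;> fin_cases j <;>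
      simp [hv, Matrix.mul_apply, Matrix.vecMul, dotProduct, Fin.sum_univ_two] <;> ring
  -- entry (0,1) is preserved
  have hf01 : ∀ x, f x 0 1 = x 0 1 := by intro x; rw [hfx]; simp
  have hg01 : ∀ x, g x 0 1 = x 0 1 := by intro x; rw [hgx]; simp
  -- left and right inverse
  have hgf : ∀ x, g (f x) = x := by
    intro x
    have hufx : u (f x) = u x := by rw [hu, hu, hf01]
    rw [hg, hufx, hf, hinv]
    calc v x * (u x * x * v x) * u x = v x * u x * x * (v x * u x) := by
          noncomm_ring
      _ = x := by rw [hvu]; simp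
  have hfg : ∀ x, f (g x) = x := by
    intro x
    have hugx : u (g x) = u x := by rw [hu, hu, hg01]
    rw [hf, hugx, hg, hinv]
    calc u x * (v x * x * u x) * v x = u x * v x * x * (u x * v x) := by
          noncomm_ring
      _ = x := by rw [huv]; simp
  -- spectrum preservation
  have hspecf : ∀ x, spectrum ℂ (f x) = spectrum ℂ x := by
    intro x
    have : f x = (U x : Matrix (Fin 2) (Fin 2) ℂ) * x * ((U x)⁻¹ : (Matrix (Fin 2) (Fin 2) ℂ)ˣ) := by
      rw [hf, hinv]; rfl
    rw [this, spectrum.units_conjugate]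
  have hspecg : ∀ x, spectrum ℂ (g x) = spectrum ℂ x := by
    intro x
    have : g x = ((U x)⁻¹ : (Matrix (Fin 2) (Fin 2) ℂ)ˣ) * x * (U x : Matrix (Fin 2) (Fin 2) ℂ) := by
      rw [hg, hinv]; rfl
    rw [this, spectrum.units_conjugate']
  -- maps-to
  have hmapf : Set.MapsTo f Ω Ω := by
    intro x hx
    rw [hΩ] at hx ⊢
    intro z hz
    exact hx z (by rwa [hspecf] at hz)
  have hmapg : Set.MapsTo g Ω Ω := by
    intro x hx
    rw [hΩ] at hx ⊢
    intro z hz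
    exact hx z (by rwa [hspecg] at hz)
  -- coordinates are differentiable
  have hc : ∀ i j, Differentiable ℂ fun x : Matrix (Fin 2) (Fin 2) ℂ => x i j :=
    fun i j => ((differentiable_apply (𝕜 := ℂ) (F' := fun _ : Fin 2 => ℂ) j).comp (differentiable_apply (𝕜 := ℂ) (F' := fun _ : Fin 2 => Fin 2 → ℂ) i) :)
  have ha' : Differentiable ℂ fun x : Matrix (Fin 2) (Fin 2) ℂ => a (x 0 1) :=
    ha.comp (hc 0 1)
  -- differentiability of f
  have hdf : Differentiable ℂ f := by
    rw [funext hfx]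
    apply differentiable_pi.mpr
    intro i
    apply differentiable_pi.mpr
    intro j
    fin_cases i <;> fin_cases j <;> simp only [Matrix.cons_val', Matrix.cons_val_zero,
      Matrix.cons_val_one, Matrix.head_cons, Matrix.head_fin_const, Matrix.empty_val',
      Matrix.cons_val_fin_one]
    · exact (hc 0 0).sub (ha'.mul (hc 0 1))
    · exact hc 0 1
    · exact ((ha'.mul (hc 0 0)).add (hc 1 0)).sub (ha'.mul ((ha'.mul (hc 0 1)).add (hc 1 1)))
    · exact (ha'.mul (hc 0 1)).add (hc 1 1)
  have hdg : Differentiable ℂ g := by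
    rw [funext hgx]
    apply differentiable_pi.mpr
    intro i
    apply differentiable_pi.mpr
    intro j
    fin_cases i <;> fin_cases j <;> simp only [Matrix.cons_val', Matrix.cons_val_zero,
      Matrix.cons_val_one, Matrix.head_cons, Matrix.head_fin_const, Matrix.empty_val',
      Matrix.cons_val_fin_one]
    · exact (hc 0 0).add (ha'.mul (hc 0 1))
    · exact hc 0 1
    · exact ((ha'.neg.mul (hc 0 0)).add (hc 1 0)).add (ha'.mul ((ha'.neg.mul (hc 0 1)).add (hc 1 1)))
    · exact (ha'.neg.mul (hc 0 1)).add (hc 1 1)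
  have hinvOn : Set.InvOn g f Ω Ω := ⟨fun x _ => hgf x, fun x _ => hfg x⟩
  exact ⟨hdf, hinvOn.bijOn hmapf hmapg, hinvOn, hdg.differentiableOn⟩
end

section
/- Let a : ℂ → ℂ be a non-constant entire function and for x ∈ M₂(ℂ) set u(x) = [[1, 0], [a(x₁₂), 1]] and f(x) = u(x)·x·u(x)⁻¹. Then there is no map v : Ω → GL₂(ℂ) that is conjugate invariant (i.e. v(q⁻¹·x·q) = v(x) for every x ∈ Ω and every invertible q ∈ M₂(ℂ)) and satisfies f(x) = v(x)⁻¹·x·v(x) for every x ∈ Ω. -/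
open Matrix

-- spectrum of !![0,t;0,0] is within {0}
lemma spec_nilp (t z : ℂ) (hz : z ∈ spectrum ℂ (!![0,t;0,0])) : z = 0 := by
  by_contra h
  rw [spectrum.mem_iff] at hz
  apply hz
  rw [Matrix.isUnit_iff_isUnit_det]
  have : (algebraMap ℂ (Matrix (Fin 2) (Fin 2) ℂ) z - !![0,t;0,0]) = !![z,-t;0,z] := by
    ext i j
    fin_cases i <;> fin_cases j <;> simp [Matrix.algebraMap_matrix_apply]
  rw [this, Matrix.det_fin_two_of]
  simpa using mul_ne_zero h h

theorem unipotent_not_conjugate_invariant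
    (a : ℂ → ℂ) (ha : Differentiable ℂ a) (hnc : ¬ ∃ c : ℂ, ∀ z : ℂ, a z = c)
    (u : Matrix (Fin 2) (Fin 2) ℂ → Matrix (Fin 2) (Fin 2) ℂ)
    (hu : ∀ x, u x = !![1, 0; a (x 0 1), 1])
    (f : Matrix (Fin 2) (Fin 2) ℂ → Matrix (Fin 2) (Fin 2) ℂ)
    (hf : ∀ x, f x = u x * x * (u x)⁻¹)
    (Ω : Set (Matrix (Fin 2) (Fin 2) ℂ))
    (hΩ : Ω = {x | ∀ z ∈ spectrum ℂ x, ‖z‖ < 1}) :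
    ¬ ∃ v : Matrix (Fin 2) (Fin 2) ℂ → Matrix (Fin 2) (Fin 2) ℂ,
        (∀ x ∈ Ω, IsUnit (v x)) ∧
        (∀ x ∈ Ω, ∀ q : Matrix (Fin 2) (Fin 2) ℂ, IsUnit q → v (q⁻¹ * x * q) = v x) ∧
        (∀ x ∈ Ω, f x = (v x)⁻¹ * x * v x) := by
  rintro ⟨v, hv1, hv2, hv3⟩
  -- membership of nilpotent matrices in Ω
  have hmem : ∀ t : ℂ, !![0,t;0,0] ∈ Ω := by
    intro t
    rw [hΩ]
    intro z hz
    rw [spec_nilp t z hz]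
    norm_num
  set x1 : Matrix (Fin 2) (Fin 2) ℂ := !![0,1;0,0] with hx1
  set w := v x1 with hw
  -- key: for t ≠ 0, v !![0,t;0,0] = w
  have hvt : ∀ t : ℂ, t ≠ 0 → v !![0,t;0,0] = w := by
    intro t ht
    have hq : IsUnit (!![(1:ℂ),0;0,t]) := by
      rw [Matrix.isUnit_iff_isUnit_det, Matrix.det_fin_two_of]
      simpa using ht
    have hqinv : (!![(1:ℂ),0;0,t])⁻¹ = !![1,0;0,t⁻¹] := by
      apply Matrix.inv_eq_right_inv
      rw [Matrix.mul_fin_two]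
      norm_num [mul_inv_cancel₀ ht]
      exact Matrix.one_fin_two.symm
    have hconj : (!![(1:ℂ),0;0,t])⁻¹ * x1 * !![(1:ℂ),0;0,t] = !![0,t;0,0] := by
      rw [hqinv, hx1, Matrix.mul_fin_two, Matrix.mul_fin_two]
      norm_num
    have := hv2 x1 (by simpa using hmem 1) _ hq
    rw [hconj] at this
    exact this
  -- value of f on !![0,t;0,0] at entry (0,0)
  have hf00 : ∀ t : ℂ, (f !![0,t;0,0]) 0 0 = -(t * a t) := by
    intro t
    rw [hf]
    have h01 : (!![(0:ℂ),t;0,0]) 0 1 = t := by simp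
    rw [hu, h01]
    have huinv : (!![(1:ℂ),0;a t,1])⁻¹ = !![1,0;-(a t),1] := by
      apply Matrix.inv_eq_right_inv
      rw [Matrix.mul_fin_two]
      norm_num
      exact Matrix.one_fin_two.symm
    rw [huinv, Matrix.mul_fin_two, Matrix.mul_fin_two]
    simp
  -- smul identity
  have hsm : ∀ t : ℂ, (!![(0:ℂ),t;0,0]) = t • x1 := by
    intro t
    ext i j
    fin_cases i <;> fin_cases j <;> simp [hx1]
  set c := (w⁻¹ * x1 * w) 0 0 with hc
  have key : ∀ t : ℂ, t ≠ 0 → a t = -c := by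
    intro t ht
    have h3 := hv3 _ (hmem t)
    rw [hvt t ht] at h3
    have : (-(t * a t) : ℂ) = (w⁻¹ * !![0,t;0,0] * w) 0 0 := by
      rw [← hf00 t, h3]
    rw [hsm t, Matrix.mul_smul, Matrix.smul_mul, Matrix.smul_apply, smul_eq_mul] at this
    rw [← hc] at this
    have h4 : t * a t = t * (-c) := by linear_combination -this
    exact mul_left_cancel₀ ht h4
  apply hnc
  refine ⟨-c, ?_⟩
  have hcont : Continuous a := ha.continuous
  have : Set.EqOn a (fun _ => -c) {(0:ℂ)}ᶜ := fun z hz => key z hz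
  have heq : a = fun _ => -c :=
    Continuous.ext_on (dense_compl_singleton 0) hcont continuous_const this
  intro z; rw [heq]
end

section
/- Let a : ℂ → ℂ be a non-constant entire function and for x ∈ M₂(ℂ) set u(x) = [[1, 0], [a(x₁₂), 1]] and f(x) = u(x)·x·u(x)⁻¹. Let 𝔖 = {x ∈ M₂(ℂ) : det x = 0 and tr x = 1/2}. Then there is no invertible matrix n ∈ M₂(ℂ) such that f(x) = n·x·n⁻¹ for all x ∈ 𝔖. -/
open Matrix Filter Topology

theorem unipotent_not_conjugation_on_fiber
    (a : ℂ → ℂ) (ha : Differentiable ℂ a) (hnc : ¬ ∃ c : ℂ, ∀ z : ℂ, a z = c)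
    (u : Matrix (Fin 2) (Fin 2) ℂ → Matrix (Fin 2) (Fin 2) ℂ)
    (hu : ∀ x, u x = !![1, 0; a (x 0 1), 1])
    (f : Matrix (Fin 2) (Fin 2) ℂ → Matrix (Fin 2) (Fin 2) ℂ)
    (hf : ∀ x, f x = u x * x * (u x)⁻¹) :
    ¬ ∃ n : Matrix (Fin 2) (Fin 2) ℂ, IsUnit n ∧
        ∀ x : Matrix (Fin 2) (Fin 2) ℂ, x.det = 0 → x.trace = 1 / 2 → f x = n * x * n⁻¹ := by
  rintro ⟨n, hn, h⟩
  have hdet : IsUnit n.det := (Matrix.isUnit_iff_isUnit_det n).mp hn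
  have key : ∀ t : ℂ, t * (n 1 0 - a t * n 0 0) = 0 := by
    intro t
    set x : Matrix (Fin 2) (Fin 2) ℂ := !![1/2, t; 0, 0] with hxdef
    have hx : x.det = 0 := by simp [hxdef, Matrix.det_fin_two_of]
    have htr : x.trace = 1/2 := by simp [hxdef, Matrix.trace_fin_two_of]
    have hx01 : x 0 1 = t := by simp [hxdef]
    have hux : u x = !![1, 0; a t, 1] := by rw [hu, hx01]
    have huinv : (u x)⁻¹ = !![1, 0; -(a t), 1] := by
      apply Matrix.inv_eq_right_inv
      rw [hux]
      ext i j
      fin_cases i <;> fin_cases j <;> simp [Matrix.mul_apply, Fin.sum_univ_two]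
    have hfx : f x = !![1/2 - t * a t, t; a t/2 - t * a t * a t, t * a t] := by
      rw [hf, huinv, hux, hxdef]
      ext i j
      fin_cases i <;> fin_cases j <;>
        simp [Matrix.mul_apply, Fin.sum_univ_two] <;> ring
    have heq := h x hx htr
    have heq2 : f x * n = n * x := by
      rw [heq, mul_assoc, mul_assoc, Matrix.nonsing_inv_mul n hdet, mul_one]
    have e00 := congrArg (fun m => m 0 0) heq2
    rw [hfx, hxdef] at e00
    simp [Matrix.mul_apply, Fin.sum_univ_two] at e00
    linear_combination e00
  rcases eq_or_ne (n 0 0) 0 with hp | hp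
  · have h10 : n 1 0 = 0 := by
      have := key 1
      rw [hp] at this
      simpa using this
    have : n.det = 0 := by
      rw [Matrix.det_fin_two, hp, h10]
      ring
    rw [this] at hdet
    simp at hdet
  · have hat : ∀ t : ℂ, t ≠ 0 → a t = n 1 0 / n 0 0 := by
      intro t ht
      have := key t
      have h2 : n 1 0 - a t * n 0 0 = 0 := by
        rcases mul_eq_zero.mp this with h | h
        · exact absurd h ht
        · exact h
      rw [eq_div_iff hp]
      linear_combination -h2
    exact hnc ⟨n 1 0 / n 0 0, by
      intro z
      rcases eq_or_ne z 0 with rfl | hz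
      · have h1 : Tendsto a (𝓝[≠] (0:ℂ)) (𝓝 (a 0)) :=
          (ha.continuous.tendsto 0).mono_left nhdsWithin_le_nhds
        have h2 : Tendsto a (𝓝[≠] (0:ℂ)) (𝓝 (n 1 0 / n 0 0)) := by
          apply Tendsto.congr' _ tendsto_const_nhds
          filter_upwards [self_mem_nhdsWithin] with w hw
          exact (hat w hw).symm
        exact tendsto_nhds_unique h1 h2
      · exact hat z hz⟩
end
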